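/- Given a feasible solution (y,f) to the relaxed origin-based model, define x(k,e) for each demand k by tracing back from t_k along the unique y(s_k,·)-selected incoming edges until reaching s_k, setting x(k,e) = 1 exactly on the traced edges. Then x is a feasible solution to the relaxed demand-based model: each x(k,·) satisfies unit flow conservation from s_k to t_k, ∑_k d_k·x(k,e) ≤ ∑_s f(s,e) ≤ c(e) for every edge e, and the sub-path optimality constraints ∑_{(h,i)} max_{k ∈ D_s} x(k,(h,i)) ≤ 1 for all i ≠ s hold. -/

import Mathlib

namespace OTD
set_option linter.unusedSectionVars false
variable {V : Type} [DecidableEq V]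

lemma map_fst_zip_tail : ∀ (p : List V), (p.zip p.tail).map Prod.fst = p.dropLast
  | [] => rfl
  | [_] => rfl
  | a :: b :: t => by
    have := map_fst_zip_tail (b :: t)
    simp only [List.zip_cons_cons, List.tail_cons, List.map_cons] at this ⊢
    rw [this]
    rfl

lemma zip_tail_prefix : ∀ (l r : List V), (l.zip l.tail).IsPrefix ((l ++ r).zip (l ++ r).tail)
  | [], r => by simp
  | [a], r => by simp
  | a :: b :: t, r => by
    have h := zip_tail_prefix (b :: t) r
    simp only [List.cons_append, List.zip_cons_cons, List.tail_cons] at h ⊢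
    exact List.cons_prefix_cons.mpr ⟨rfl, h⟩

lemma zip_tail_concat : ∀ (p : List V) (b i : V), p.getLast? = some b →
    ((p ++ [i]).zip (p ++ [i]).tail) = p.zip p.tail ++ [(b, i)]
  | [], b, i, h => by simp at h
  | [a], b, i, h => by
    simp only [List.getLast?_singleton, Option.some.injEq] at h
    subst h; rfl
  | a :: c :: t, b, i, h => by
    have h' : (c :: t).getLast? = some b := by
      rw [← h]; rfl
    have := zip_tail_concat (c :: t) b i h'
    simp only [List.cons_append, List.zip_cons_cons, List.tail_cons] at this ⊢
    rw [this]

lemma mem_zip_tail : ∀ (t : List V) (i j : V) (b : List V),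
    (i, j) ∈ ((t ++ i :: j :: b).zip (t ++ i :: j :: b).tail)
  | [], i, j, b => by simp
  | c :: t, i, j, b => by
    have h := mem_zip_tail t i j b
    rcases he : t ++ i :: j :: b with _ | ⟨x, m⟩
    · simp at he
    · rw [he] at h
      simp only [List.tail_cons] at h
      simp only [List.cons_append, he, List.zip_cons_cons, List.tail_cons, List.mem_cons]
      exact Or.inr h

lemma exists_decomp_of_mem_zip_tail : ∀ (l : List V) (u v : V),
    (u, v) ∈ l.zip l.tail → ∃ a b, l = a ++ u :: v :: b
  | [], u, v, h => by simp at h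
  | x :: m, u, v, h => by
    rcases hm : m with _ | ⟨w, m'⟩
    · subst hm; simp at h
    · subst hm
      simp only [List.zip_cons_cons, List.tail_cons, List.mem_cons, Prod.mk.injEq] at h
      rcases h with ⟨rfl, rfl⟩ | h
      · exact ⟨[], m', rfl⟩
      · obtain ⟨a, b, hab⟩ := exists_decomp_of_mem_zip_tail (w :: m') u v h
        exact ⟨x :: a, b, by simp [hab]⟩

lemma nodup_decomp_unique : ∀ (a a' : List V) (i : V) (b b' : List V),
    (a ++ i :: b).Nodup → a ++ i :: b = a' ++ i :: b' → a = a' ∧ b = b'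
  | [], [], i, b, b', _, h => by simpa using h
  | [], c' :: t', i, b, b', hnd, h => by
    simp only [List.nil_append, List.cons_append, List.cons.injEq] at h
    obtain ⟨rfl, rfl⟩ := h
    simp only [List.nil_append, List.nodup_cons] at hnd
    exact absurd (by simp : i ∈ t' ++ i :: b') hnd.1
  | c :: t, [], i, b, b', hnd, h => by
    simp only [List.nil_append, List.cons_append, List.cons.injEq] at h
    obtain ⟨rfl, rfl⟩ := h
    simp only [List.cons_append, List.nodup_cons] at hnd
    exact absurd (by simp : c ∈ t ++ c :: b) hnd.1
  | c :: t, c' :: t', i, b, b', hnd, h => by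
    simp only [List.cons_append, List.cons.injEq] at h
    obtain ⟨rfl, h⟩ := h
    obtain ⟨h1, h2⟩ := nodup_decomp_unique t t' i b b' (by simp only [List.cons_append, List.nodup_cons] at hnd; exact hnd.2) h
    exact ⟨by rw [h1], h2⟩



lemma sum_indicator_eq_count (L : Finset (V × V)) (zp : List (V × V)) (hnd : zp.Nodup)
    (hsub : ∀ e ∈ zp, e ∈ L) (P : V × V → Prop) [DecidablePred P] :
    (∑ e ∈ L.filter P, (if e ∈ zp then (1:ℤ) else 0)) = (zp.filter (fun e => P e)).length := by
  rw [Finset.sum_boole]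
  congr 1
  rw [← List.toFinset_card_of_nodup (hnd.filter (fun e => decide (P e)))]
  congr 1
  ext e
  simp only [Finset.mem_filter, List.mem_toFinset, List.mem_filter, decide_eq_true_eq]
  constructor
  · rintro ⟨⟨_, hP⟩, hz⟩; exact ⟨hz, hP⟩
  · rintro ⟨hz, hP⟩; exact ⟨⟨hsub e hz, hP⟩, hz⟩

lemma countP_nodup : ∀ (l : List V) (i : V), l.Nodup →
    l.countP (fun v => decide (v = i)) = if i ∈ l then 1 else 0
  | [], i, _ => by simp
  | c :: t, i, h => by
    rw [List.countP_cons, countP_nodup t i (List.nodup_cons.mp h).2]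
    by_cases hci : c = i
    · subst hci
      rw [if_neg (List.nodup_cons.mp h).1]
      simp
    · simp [hci, Ne.symm hci]

lemma count_snd (p : List V) (hnd : p.Nodup) (i : V) :
    ((p.zip p.tail).filter (fun e => e.2 = i)).length = if i ∈ p.tail then 1 else 0 := by
  have hmap : (p.zip p.tail).map Prod.snd = p.tail :=
    List.map_snd_zip (by cases p <;> simp)
  have h1 : ((p.zip p.tail).filter (fun e => e.2 = i)).length
      = (p.zip p.tail).countP (fun e => e.2 = i) := List.countP_eq_length_filter.symm
  rw [h1]
  have h2 : (p.zip p.tail).countP (fun e => decide (e.2 = i))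
      = ((p.zip p.tail).map Prod.snd).countP (fun v => decide (v = i)) := by
    rw [List.countP_map]; rfl
  rw [h2, hmap]
  exact countP_nodup p.tail i hnd.tail

lemma count_fst (p : List V) (hnd : p.Nodup) (i : V) :
    ((p.zip p.tail).filter (fun e => e.1 = i)).length = if i ∈ p.dropLast then 1 else 0 := by
  have hmap := map_fst_zip_tail p
  have h1 : ((p.zip p.tail).filter (fun e => e.1 = i)).length
      = (p.zip p.tail).countP (fun e => e.1 = i) := List.countP_eq_length_filter.symm
  rw [h1]
  have h2 : (p.zip p.tail).countP (fun e => decide (e.1 = i))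
      = ((p.zip p.tail).map Prod.fst).countP (fun v => decide (v = i)) := by
    rw [List.countP_map]; rfl
  rw [h2, hmap]
  exact countP_nodup p.dropLast i (hnd.sublist (List.dropLast_sublist p))

lemma path_conservation (L : Finset (V × V)) (p : List V) (a b : V)
    (hh : p.head? = some a) (hl : p.getLast? = some b) (hnd : p.Nodup)
    (hsub : ∀ e ∈ p.zip p.tail, e ∈ L) (hab : a ≠ b) (i : V) :
    (∑ e ∈ L.filter (fun e => e.2 = i), (if e ∈ p.zip p.tail then (1:ℤ) else 0))
      - (∑ e ∈ L.filter (fun e => e.1 = i), (if e ∈ p.zip p.tail then (1:ℤ) else 0))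
    = if i = a then -1 else if i = b then 1 else 0 := by
  have hznd : (p.zip p.tail).Nodup := by
    have hmap : (p.zip p.tail).map Prod.snd = p.tail :=
      List.map_snd_zip (by cases p <;> simp)
    exact List.Nodup.of_map Prod.snd (by rw [hmap]; exact hnd.tail)
  rw [sum_indicator_eq_count L _ hznd hsub, sum_indicator_eq_count L _ hznd hsub,
    count_snd p hnd i, count_fst p hnd i]
  -- structure of p
  obtain ⟨t, rfl⟩ : ∃ t, p = a :: t := by
    cases p with
    | nil => simp at hh
    | cons c t => exact ⟨t, by simpa using (by simpa using hh : c = a) ▸ rfl⟩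
  obtain ⟨q, hq⟩ : ∃ q, a :: t = q ++ [b] := by
    rcases List.eq_nil_or_concat (a :: t) with h | ⟨q, z, hz⟩
    · simp at h
    · rw [List.concat_eq_append] at hz
      rw [hz, List.getLast?_concat] at hl
      have hzb : z = b := by simpa using hl
      exact ⟨q, by rw [hz, hzb]⟩
  have hmem_tail : ∀ j, j ∈ (a :: t).tail ↔ (j ∈ a :: t ∧ j ≠ a) := by
    intro j
    simp only [List.tail_cons, List.mem_cons]
    constructor
    · intro hj
      refine ⟨Or.inr hj, ?_⟩
      rintro rfl
      exact (List.nodup_cons.mp hnd).1 hj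
    · rintro ⟨hj | hj, hne⟩
      · exact absurd hj hne
      · exact hj
  have hmem_drop : ∀ j, j ∈ (a :: t).dropLast ↔ (j ∈ a :: t ∧ j ≠ b) := by
    intro j
    rw [hq, List.dropLast_concat]
    have hbq : b ∉ q := by
      have h2 : (q ++ [b]).Nodup := hq ▸ hnd
      intro hb
      exact (List.disjoint_of_nodup_append h2) hb (by simp)
    constructor
    · intro hj
      refine ⟨List.mem_append_left _ hj, ?_⟩
      rintro rfl; exact hbq hj
    · rintro ⟨hj, hne⟩
      rcases List.mem_append.mp hj with h | h
      · exact h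
      · simp at h; exact absurd h hne
  have hbmem : b ∈ a :: t := by rw [hq]; simp
  by_cases hia : i = a
  · have h1 : i ∉ (a :: t).tail := by rw [hmem_tail]; simp [hia]
    have h2 : i ∈ (a :: t).dropLast := by
      rw [hmem_drop]; exact ⟨by simp [hia], by rw [hia]; exact hab⟩
    rw [if_neg h1, if_pos h2, if_pos hia]
    norm_num
  · by_cases hib : i = b
    · have h1 : i ∈ (a :: t).tail := by
        rw [hmem_tail]; exact ⟨by rw [hib]; exact hbmem, hia⟩
      have h2 : i ∉ (a :: t).dropLast := by rw [hmem_drop]; simp [hib]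
      rw [if_pos h1, if_neg h2, if_neg hia, if_pos hib]
      norm_num
    · by_cases hip : i ∈ a :: t
      · have h1 : i ∈ (a :: t).tail := by rw [hmem_tail]; exact ⟨hip, hia⟩
        have h2 : i ∈ (a :: t).dropLast := by rw [hmem_drop]; exact ⟨hip, hib⟩
        rw [if_pos h1, if_pos h2, if_neg hia, if_neg hib]
        norm_num
      · have h1 : i ∉ (a :: t).tail := by rw [hmem_tail]; tauto
        have h2 : i ∉ (a :: t).dropLast := by rw [hmem_drop]; tauto
        rw [if_neg h1, if_neg h2, if_neg hia, if_neg hib]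
        norm_num


lemma reach_lemma {V D : Type} [Fintype V] [DecidableEq V] [Fintype D] [DecidableEq D]
    (L : Finset (V × V)) (sk tk : D → V) (d : D → ℝ) (hd : ∀ k, 0 < d k)
    (y : V → V × V → ℕ) (f : V → V × V → ℝ)
    (hy01 : ∀ s e, y s e ≤ 1) (hf0 : ∀ s e, 0 ≤ f s e)
    (hfb : ∀ s e, f s e ≤ (y s e : ℝ) * ∑ k ∈ Finset.univ.filter (fun k => sk k = s), d k)
    (hcons : ∀ (s i : V),
      ∑ e ∈ L.filter (fun e => e.2 = i), f s e - ∑ e ∈ L.filter (fun e => e.1 = i), f s e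
        = (∑ k ∈ Finset.univ.filter (fun k => sk k = s ∧ tk k = i), d k)
          - (if i = s then ∑ k ∈ Finset.univ.filter (fun k => sk k = s), d k else 0))
    (hpu : ∀ (s i : V),
      (i = s → ∑ e ∈ L.filter (fun e => e.2 = i), y s e = 0)
      ∧ ((∃ k, sk k = s ∧ tk k = i) → ∑ e ∈ L.filter (fun e => e.2 = i), y s e = 1)
      ∧ (i ≠ s → ∑ e ∈ L.filter (fun e => e.2 = i), y s e ≤ 1))
    (s i : V) (his : i ≠ s)
    (hdem : 0 < ∑ k ∈ Finset.univ.filter (fun k => sk k = s ∧ tk k = i), d k) :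
    ∃ p : List V, p.head? = some s ∧ p.getLast? = some i ∧ p.Nodup ∧
      ∀ e ∈ p.zip p.tail, e ∈ L ∧ y s e = 1 := by
  classical
  obtain ⟨inflow, hinf⟩ : ∃ F : V → ℝ, ∀ j, F j = ∑ e ∈ L.filter (fun e => e.2 = j), f s e :=
    ⟨_, fun _ => rfl⟩
  obtain ⟨outflow, hout⟩ : ∃ F : V → ℝ, ∀ j, F j = ∑ e ∈ L.filter (fun e => e.1 = j), f s e :=
    ⟨_, fun _ => rfl⟩
  obtain ⟨dem, hdem'⟩ : ∃ F : V → ℝ,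
      ∀ j, F j = ∑ k ∈ Finset.univ.filter (fun k => sk k = s ∧ tk k = j), d k :=
    ⟨_, fun _ => rfl⟩
  obtain ⟨Reach, hR⟩ : ∃ R : V → Prop, ∀ j, R j ↔ (∃ p : List V, p.head? = some s ∧
      p.getLast? = some j ∧ p.Nodup ∧ ∀ e ∈ p.zip p.tail, e ∈ L ∧ y s e = 1) :=
    ⟨_, fun _ => Iff.rfl⟩
  have hout0 : ∀ j, 0 ≤ outflow j := fun j => by
    rw [hout]; exact Finset.sum_nonneg (fun e _ => hf0 s e)
  have hdem0 : ∀ j, 0 ≤ dem j := fun j => by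
    rw [hdem']; exact Finset.sum_nonneg (fun k _ => (hd k).le)
  have hbal : ∀ j, j ≠ s → inflow j = outflow j + dem j := by
    intro j hj
    have h := hcons s j
    rw [if_neg hj] at h
    rw [hinf, hout, hdem']
    linarith
  have hsel : ∀ j, j ≠ s → 0 < inflow j →
      ∃ e, e ∈ L ∧ e.2 = j ∧ y s e = 1 ∧ f s e = inflow j := by
    intro j hj hpos
    have hex : ∃ e ∈ L.filter (fun e => e.2 = j), 0 < f s e := by
      by_contra h
      push_neg at h
      have : inflow j ≤ 0 := by rw [hinf]; exact Finset.sum_nonpos h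
      linarith
    obtain ⟨e0, he0f, he0pos⟩ := hex
    have he0L := Finset.mem_filter.mp he0f
    have hy0 : y s e0 = 1 := by
      by_contra h
      have h0 : y s e0 = 0 := by have := hy01 s e0; omega
      have := hfb s e0
      rw [h0] at this
      push_cast at this
      linarith
    have hone : ∀ e' ∈ L.filter (fun e => e.2 = j), e' ≠ e0 → y s e' = 0 := by
      intro e' he' hne
      have hsub2 : ({e0, e'} : Finset (V × V)) ⊆ L.filter (fun e => e.2 = j) := by
        intro z hz
        rcases Finset.mem_insert.mp hz with rfl | hz
        · exact he0f
        · rw [Finset.mem_singleton.mp hz]; exact he'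
      have hsum := Finset.sum_le_sum_of_subset (f := y s) hsub2
      rw [Finset.sum_pair (Ne.symm hne)] at hsum
      have hle := (hpu s j).2.2 hj
      omega
    have hflow0 : ∀ e' ∈ L.filter (fun e => e.2 = j), e' ≠ e0 → f s e' = 0 := by
      intro e' he' hne
      have h0 := hone e' he' hne
      have h1 := hfb s e'
      rw [h0] at h1
      push_cast at h1
      have h2 := hf0 s e'
      linarith
    have hconc : inflow j = f s e0 := by
      rw [hinf]
      exact Finset.sum_eq_single_of_mem e0 he0f hflow0
    exact ⟨e0, he0L.1, he0L.2, hy0, hconc.symm⟩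
  have hEx : ∀ j, ∃ e, (j ≠ s ∧ 0 < inflow j) →
      (e ∈ L ∧ e.2 = j ∧ y s e = 1 ∧ f s e = inflow j) := by
    intro j
    by_cases h : j ≠ s ∧ 0 < inflow j
    · obtain ⟨e, he⟩ := hsel j h.1 h.2
      exact ⟨e, fun _ => he⟩
    · exact ⟨(s, s), fun h' => absurd h' h⟩
  choose E hE using hEx
  have reach_s : Reach s := (hR s).mpr ⟨[s], rfl, rfl, List.nodup_singleton s, by simp⟩
  have reach_step : ∀ u v, Reach u → (u, v) ∈ L → y s (u, v) = 1 → Reach v := by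
    intro u v hu heL hy1
    obtain ⟨p, hh, hl, hnd, hsel'⟩ := (hR u).mp hu
    by_cases hv : v ∈ p
    · obtain ⟨q, r, rfl⟩ := List.append_of_mem hv
      refine (hR v).mpr ⟨q ++ [v], ?_, List.getLast?_concat, ?_, ?_⟩
      · cases q with
        | nil => simpa using hh
        | cons c t => simpa using hh
      · exact hnd.sublist (((List.nil_sublist r).cons₂ v).append_left q)
      · intro e he
        have hpre := zip_tail_prefix (q ++ [v]) r
        rw [List.append_assoc, List.singleton_append] at hpre
        exact hsel' e (hpre.subset he)
    · refine (hR v).mpr ⟨p ++ [v], ?_, List.getLast?_concat, ?_, ?_⟩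
      · cases p with
        | nil => simp at hh
        | cons c t => simpa using hh
      · rw [List.nodup_append]
        refine ⟨hnd, List.nodup_singleton v, ?_⟩
        intro a ha b hb hab
        rw [List.mem_singleton.mp hb] at hab
        rw [hab] at ha
        exact hv ha
      · intro e he
        rw [zip_tail_concat p u v hl] at he
        rcases List.mem_append.mp he with h | h
        · exact hsel' e h
        · rw [List.mem_singleton.mp h]
          exact ⟨heL, hy1⟩
  set U : Finset V := Finset.univ.filter (fun j => ¬ j = s ∧ ¬ Reach j ∧ 0 < inflow j) with hU
  have hUmem : ∀ j, j ∈ U ↔ (¬ j = s ∧ ¬ Reach j ∧ 0 < inflow j) := by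
    intro j
    rw [hU, Finset.mem_filter]
    simp
  have hEU : ∀ j ∈ U, E j ∈ L ∧ (E j).2 = j ∧ y s (E j) = 1 ∧ f s (E j) = inflow j := by
    intro j hj
    rcases (hUmem j).mp hj with ⟨h1, h2, h3⟩
    exact hE j ⟨h1, h3⟩
  have hpi : ∀ j ∈ U, (E j).1 ∈ U := by
    intro j hj
    obtain ⟨heL, he2, hy1, hfe⟩ := hEU j hj
    obtain ⟨h1, h2, h3⟩ := (hUmem j).mp hj
    have hkey : ((E j).1, j) = E j := by
      have h := Prod.mk.eta (p := E j)
      rw [he2] at h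
      exact h
    have hedge : ((E j).1, j) ∈ L := by rw [hkey]; exact heL
    have hyedge : y s ((E j).1, j) = 1 := by rw [hkey]; exact hy1
    have hns : ¬ (E j).1 = s := by
      intro hq
      exact h2 (reach_step _ _ (by rw [hq]; exact reach_s) hedge hyedge)
    have hnr : ¬ Reach (E j).1 := fun hr => h2 (reach_step _ _ hr hedge hyedge)
    have hpos : 0 < inflow (E j).1 := by
      have hb := hbal (E j).1 hns
      have hle : f s (E j) ≤ outflow (E j).1 := by
        rw [hout]
        exact Finset.single_le_sum (fun e _ => hf0 s e) (Finset.mem_filter.mpr ⟨heL, rfl⟩)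
      have := hdem0 (E j).1
      linarith
    exact (hUmem _).mpr ⟨hns, hnr, hpos⟩
  have hsum1 : ∑ j ∈ U, inflow j = ∑ j ∈ U, outflow j + ∑ j ∈ U, dem j := by
    rw [← Finset.sum_add_distrib]
    exact Finset.sum_congr rfl (fun j hj => hbal j ((hUmem j).mp hj).1)
  have hsum2 : ∑ j ∈ U, f s (E j) = ∑ j ∈ U, inflow j :=
    Finset.sum_congr rfl (fun j hj => (hEU j hj).2.2.2)
  have hfib : ∑ u ∈ U, ∑ j ∈ U.filter (fun j => (E j).1 = u), f s (E j)
      = ∑ j ∈ U, f s (E j) := Finset.sum_fiberwise_of_maps_to hpi _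
  have hsum3 : ∀ u ∈ U, ∑ j ∈ U.filter (fun j => (E j).1 = u), f s (E j) ≤ outflow u := by
    intro u hu
    have hinj : ∀ j1 ∈ U.filter (fun j => (E j).1 = u), ∀ j2 ∈ U.filter (fun j => (E j).1 = u),
        E j1 = E j2 → j1 = j2 := by
      intro j1 h1 j2 h2 he
      have e1 := (hEU j1 (Finset.mem_of_mem_filter j1 h1)).2.1
      have e2 := (hEU j2 (Finset.mem_of_mem_filter j2 h2)).2.1
      rw [← e1, ← e2, he]
    have himg : (U.filter (fun j => (E j).1 = u)).image E ⊆ L.filter (fun e => e.1 = u) := by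
      intro e he
      simp only [Finset.mem_image] at he
      obtain ⟨j, hj, rfl⟩ := he
      have hj' := Finset.mem_filter.mp hj
      exact Finset.mem_filter.mpr ⟨(hEU j hj'.1).1, hj'.2⟩
    calc ∑ j ∈ U.filter (fun j => (E j).1 = u), f s (E j)
        = ∑ e ∈ (U.filter (fun j => (E j).1 = u)).image E, f s e := (Finset.sum_image hinj).symm
      _ ≤ ∑ e ∈ L.filter (fun e => e.1 = u), f s e :=
          Finset.sum_le_sum_of_subset_of_nonneg himg (fun e _ _ => hf0 s e)
      _ = outflow u := (hout u).symm
  have hdemsum : ∑ j ∈ U, dem j ≤ 0 := by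
    have h1 : ∑ j ∈ U, inflow j ≤ ∑ j ∈ U, outflow j := by
      rw [← hsum2, ← hfib]
      exact Finset.sum_le_sum hsum3
    linarith
  by_contra hnot
  have hRnot : ¬ Reach i := fun hr => hnot ((hR i).mp hr)
  have hpos : 0 < inflow i := by
    have hb := hbal i his
    have := hout0 i
    have hdi : 0 < dem i := by rw [hdem']; exact hdem
    linarith
  have hiU : i ∈ U := (hUmem i).mpr ⟨his, hRnot, hpos⟩
  have : dem i ≤ ∑ j ∈ U, dem j := Finset.single_le_sum (fun j _ => hdem0 j) hiU
  have hdi : 0 < dem i := by rw [hdem']; exact hdem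
  linarith

lemma flow_lower {V D : Type} [Fintype V] [DecidableEq V] [Fintype D] [DecidableEq D]
    (L : Finset (V × V)) (sk tk : D → V) (d : D → ℝ) (hd : ∀ k, 0 < d k)
    (y : V → V × V → ℕ) (f : V → V × V → ℝ)
    (hy01 : ∀ s e, y s e ≤ 1) (hf0 : ∀ s e, 0 ≤ f s e)
    (hfb : ∀ s e, f s e ≤ (y s e : ℝ) * ∑ k ∈ Finset.univ.filter (fun k => sk k = s), d k)
    (hcons : ∀ (s i : V),
      ∑ e ∈ L.filter (fun e => e.2 = i), f s e - ∑ e ∈ L.filter (fun e => e.1 = i), f s e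
        = (∑ k ∈ Finset.univ.filter (fun k => sk k = s ∧ tk k = i), d k)
          - (if i = s then ∑ k ∈ Finset.univ.filter (fun k => sk k = s), d k else 0))
    (hpu : ∀ (s i : V),
      (i = s → ∑ e ∈ L.filter (fun e => e.2 = i), y s e = 0)
      ∧ ((∃ k, sk k = s ∧ tk k = i) → ∑ e ∈ L.filter (fun e => e.2 = i), y s e = 1)
      ∧ (i ≠ s → ∑ e ∈ L.filter (fun e => e.2 = i), y s e ≤ 1))
    (s : V) (P : D → List V)
    (hP : ∀ k, sk k = s → (P k).head? = some s ∧ (P k).getLast? = some (tk k) ∧ (P k).Nodup ∧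
      ∀ e ∈ (P k).zip (P k).tail, e ∈ L ∧ y s e = 1) :
    ∀ e ∈ L, ∑ k ∈ Finset.univ.filter (fun k => sk k = s ∧ e ∈ (P k).zip (P k).tail), d k
      ≤ f s e := by
  classical
  obtain ⟨inflow, hinf⟩ : ∃ F : V → ℝ, ∀ j, F j = ∑ e ∈ L.filter (fun e => e.2 = j), f s e :=
    ⟨_, fun _ => rfl⟩
  obtain ⟨outflow, hout⟩ : ∃ F : V → ℝ, ∀ j, F j = ∑ e ∈ L.filter (fun e => e.1 = j), f s e :=
    ⟨_, fun _ => rfl⟩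
  obtain ⟨dem, hdem'⟩ : ∃ F : V → ℝ,
      ∀ j, F j = ∑ k ∈ Finset.univ.filter (fun k => sk k = s ∧ tk k = j), d k :=
    ⟨_, fun _ => rfl⟩
  have hout0 : ∀ j, 0 ≤ outflow j := fun j => by
    rw [hout]; exact Finset.sum_nonneg (fun e _ => hf0 s e)
  have hdem0 : ∀ j, 0 ≤ dem j := fun j => by
    rw [hdem']; exact Finset.sum_nonneg (fun k _ => (hd k).le)
  have hbal : ∀ j, j ≠ s → inflow j = outflow j + dem j := by
    intro j hj
    have h := hcons s j
    rw [if_neg hj] at h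
    rw [hinf, hout, hdem']
    linarith
  have huniq : ∀ j, j ≠ s → ∀ e1 e2, e1 ∈ L → e2 ∈ L → e1.2 = j → e2.2 = j →
      y s e1 = 1 → y s e2 = 1 → e1 = e2 := by
    intro j hj e1 e2 h1 h2 h12 h22 hy1 hy2
    by_contra hne
    have hsub2 : ({e1, e2} : Finset (V × V)) ⊆ L.filter (fun e => e.2 = j) := by
      intro z hz
      rcases Finset.mem_insert.mp hz with rfl | hz
      · exact Finset.mem_filter.mpr ⟨h1, h12⟩
      · rw [Finset.mem_singleton.mp hz]; exact Finset.mem_filter.mpr ⟨h2, h22⟩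
    have hsum := Finset.sum_le_sum_of_subset (f := y s) hsub2
    rw [Finset.sum_pair hne] at hsum
    have hle := (hpu s j).2.2 hj
    omega
  have hconc : ∀ j, j ≠ s → ∀ e0, e0 ∈ L → e0.2 = j → y s e0 = 1 → inflow j = f s e0 := by
    intro j hj e0 he0 he02 hy0
    rw [hinf]
    refine Finset.sum_eq_single_of_mem e0 (Finset.mem_filter.mpr ⟨he0, he02⟩) ?_
    intro e' he' hne
    have he'' := Finset.mem_filter.mp he'
    have h0 : y s e' = 0 := by
      by_contra h
      have h1 : y s e' = 1 := by have := hy01 s e'; omega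
      exact hne (huniq j hj e' e0 he''.1 he0 he''.2 he02 h1 hy0)
    have h1 := hfb s e'
    rw [h0] at h1
    push_cast at h1
    have h2 := hf0 s e'
    linarith
  -- nodes on a path (other than the head s) are ≠ s
  have hne_s : ∀ k, sk k = s → ∀ u v, (u, v) ∈ (P k).zip (P k).tail → v ≠ s := by
    intro k hks u v huv
    obtain ⟨hh, hl, hnd, hsel⟩ := hP k hks
    have hv : v ∈ (P k).tail := (List.of_mem_zip huv).2
    cases hpk : P k with
    | nil => rw [hpk] at hh; simp at hh
    | cons c t =>
      rw [hpk] at hh hnd hv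
      have hcs : c = s := by simpa using hh
      simp only [List.tail_cons] at hv
      intro hvs
      rw [hvs, ← hcs] at hv
      exact (List.nodup_cons.mp hnd).1 hv
  have key : ∀ n (j : V), j ≠ s → ∀ e0, e0 ∈ L → e0.2 = j → y s e0 = 1 →
      ∑ k ∈ Finset.univ.filter
        (fun k => sk k = s ∧ ∃ a b, P k = a ++ j :: b ∧ b.length ≤ n), d k ≤ f s e0 := by
    intro n
    induction n with
    | zero =>
      intro j hj e0 he0 he02 hy0
      have hsub : Finset.univ.filter
          (fun k => sk k = s ∧ ∃ a b, P k = a ++ j :: b ∧ b.length ≤ 0)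
          ⊆ Finset.univ.filter (fun k => sk k = s ∧ tk k = j) := by
        intro k hk
        rw [Finset.mem_filter] at hk ⊢
        obtain ⟨_, hks, a, b, hpk, hb⟩ := hk
        have hb0 : b = [] := List.length_eq_zero_iff.mp (Nat.le_zero.mp hb)
        subst hb0
        have hlast := (hP k hks).2.1
        rw [hpk] at hlast
        have : (a ++ [j]).getLast? = some j := List.getLast?_concat
        rw [this] at hlast
        exact ⟨Finset.mem_univ k, hks, (Option.some.injEq _ _).mp hlast.symm⟩
      have h1 : ∑ k ∈ Finset.univ.filter
          (fun k => sk k = s ∧ ∃ a b, P k = a ++ j :: b ∧ b.length ≤ 0), d k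
          ≤ dem j := by
        rw [hdem']
        exact Finset.sum_le_sum_of_subset_of_nonneg hsub (fun k _ _ => (hd k).le)
      have h2 := hbal j hj
      have h3 := hconc j hj e0 he0 he02 hy0
      have h4 := hout0 j
      linarith
    | succ n ih =>
      intro j hj e0 he0 he02 hy0
      have hK2disj : ∀ v1 ∈ (Finset.univ : Finset V), ∀ v2 ∈ (Finset.univ : Finset V),
          v1 ≠ v2 → Disjoint
          (Finset.univ.filter (fun k => sk k = s ∧ ∃ a b, P k = a ++ j :: v1 :: b ∧ b.length ≤ n))
          (Finset.univ.filter (fun k => sk k = s ∧ ∃ a b, P k = a ++ j :: v2 :: b ∧ b.length ≤ n))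
          := by
        intro v1 _ v2 _ hne
        rw [Finset.disjoint_left]
        intro k hk1 hk2
        rw [Finset.mem_filter] at hk1 hk2
        obtain ⟨_, hks, a1, b1, hp1, _⟩ := hk1
        obtain ⟨_, _, a2, b2, hp2, _⟩ := hk2
        have hnd := (hP k hks).2.2.1
        rw [hp1] at hnd
        obtain ⟨-, hcons2⟩ := nodup_decomp_unique a1 a2 j (v1 :: b1) (v2 :: b2) hnd (hp1 ▸ hp2)
        injection hcons2 with hv _
        exact hne hv
      set K : Finset D := Finset.univ.filter
        (fun k => sk k = s ∧ ∃ a b, P k = a ++ j :: b ∧ b.length ≤ n + 1) with hK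
      set K1 : Finset D := Finset.univ.filter (fun k => sk k = s ∧ tk k = j) with hK1
      set K2 : V → Finset D := fun v => Finset.univ.filter
        (fun k => sk k = s ∧ ∃ a b, P k = a ++ j :: v :: b ∧ b.length ≤ n) with hK2
      set J : Finset V := Finset.univ.filter (fun v => (K2 v).Nonempty) with hJ
      have hJedge : ∀ v ∈ J, (j, v) ∈ L ∧ y s (j, v) = 1 ∧ v ≠ s := by
        intro v hv
        obtain ⟨k1, hk1⟩ := (Finset.mem_filter.mp hv).2
        rw [hK2, Finset.mem_filter] at hk1
        obtain ⟨_, hks, a, b, hpk, _⟩ := hk1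
        have hmem : (j, v) ∈ (P k1).zip (P k1).tail := by
          rw [hpk]; exact mem_zip_tail a j v b
        obtain ⟨heL', hy'⟩ := (hP k1 hks).2.2.2 _ hmem
        exact ⟨heL', hy', hne_s k1 hks j v hmem⟩
      have hKsub : K ⊆ K1 ∪ J.biUnion K2 := by
        intro k hk
        rw [hK, Finset.mem_filter] at hk
        obtain ⟨_, hks, a, b, hpk, hb⟩ := hk
        by_cases htk : tk k = j
        · exact Finset.mem_union_left _
            (by rw [hK1, Finset.mem_filter]; exact ⟨Finset.mem_univ k, hks, htk⟩)
        · cases b with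
          | nil =>
            exfalso
            have hlast := (hP k hks).2.1
            rw [hpk] at hlast
            have : (a ++ [j]).getLast? = some j := List.getLast?_concat
            rw [this] at hlast
            exact htk ((Option.some.injEq _ _).mp hlast.symm).symm.symm
          | cons v b' =>
            have hb' : b'.length ≤ n := by
              simp only [List.length_cons] at hb; omega
            have hkK2 : k ∈ K2 v := by
              rw [hK2, Finset.mem_filter]
              exact ⟨Finset.mem_univ k, hks, a, b', hpk, hb'⟩
            refine Finset.mem_union_right _ (Finset.mem_biUnion.mpr ⟨v, ?_, hkK2⟩)
            rw [hJ, Finset.mem_filter]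
            exact ⟨Finset.mem_univ v, k, hkK2⟩
      have hdisj : Disjoint K1 (J.biUnion K2) := by
        rw [Finset.disjoint_left]
        intro k hk1 hk2
        rw [hK1, Finset.mem_filter] at hk1
        obtain ⟨_, hks, htk⟩ := hk1
        rw [Finset.mem_biUnion] at hk2
        obtain ⟨v, hv, hkv⟩ := hk2
        rw [hK2, Finset.mem_filter] at hkv
        obtain ⟨_, _, a, b, hpk, _⟩ := hkv
        have hnd := (hP k hks).2.2.1
        have hlast := (hP k hks).2.1
        rw [hpk] at hnd hlast
        rw [List.getLast?_append_cons, List.getLast?_cons_cons] at hlast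
        have h1 : (v :: b).getLast? = some j := by rw [hlast, htk]
        have hjmem : j ∈ v :: b := by
          obtain ⟨hne', hEq⟩ := List.mem_getLast?_eq_getLast (Option.mem_def.mpr h1)
          rw [hEq]
          exact List.getLast_mem hne'
        have hnd2 := (List.nodup_append.mp hnd).2.1
        exact (List.nodup_cons.mp hnd2).1 hjmem
      have hstep2 : ∀ v ∈ J, ∑ k ∈ K2 v, d k ≤ f s (j, v) := by
        intro v hv
        obtain ⟨heL', hy', hvs⟩ := hJedge v hv
        have hsubv : K2 v ⊆ Finset.univ.filter
            (fun k => sk k = s ∧ ∃ a b, P k = a ++ v :: b ∧ b.length ≤ n) := by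
          intro k hk
          rw [hK2, Finset.mem_filter] at hk
          obtain ⟨_, hks, a, b, hpk, hb⟩ := hk
          rw [Finset.mem_filter]
          exact ⟨Finset.mem_univ k, hks, a ++ [j], b, by rw [hpk]; simp, hb⟩
        calc ∑ k ∈ K2 v, d k
            ≤ ∑ k ∈ Finset.univ.filter
              (fun k => sk k = s ∧ ∃ a b, P k = a ++ v :: b ∧ b.length ≤ n), d k :=
              Finset.sum_le_sum_of_subset_of_nonneg hsubv (fun k _ _ => (hd k).le)
          _ ≤ f s (j, v) := ih v hvs (j, v) heL' rfl hy'
      have hstep3 : ∑ v ∈ J, f s (j, v) ≤ outflow j := by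
        rw [hout]
        have hinj : ∀ v1 ∈ J, ∀ v2 ∈ J, (j, v1) = (j, v2) → v1 = v2 := by
          intro v1 _ v2 _ h
          exact ((Prod.mk.injEq _ _ _ _).mp h).2
        have himg : J.image (fun v => (j, v)) ⊆ L.filter (fun e => e.1 = j) := by
          intro e he
          rw [Finset.mem_image] at he
          obtain ⟨v, hv, rfl⟩ := he
          exact Finset.mem_filter.mpr ⟨(hJedge v hv).1, rfl⟩
        calc ∑ v ∈ J, f s (j, v)
            = ∑ e ∈ J.image (fun v => (j, v)), f s e := (Finset.sum_image hinj).symm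
          _ ≤ ∑ e ∈ L.filter (fun e => e.1 = j), f s e :=
              Finset.sum_le_sum_of_subset_of_nonneg himg (fun e _ _ => hf0 s e)
      have hmain : ∑ k ∈ K, d k ≤ ∑ k ∈ K1, d k + outflow j := by
        calc ∑ k ∈ K, d k
            ≤ ∑ k ∈ K1 ∪ J.biUnion K2, d k :=
              Finset.sum_le_sum_of_subset_of_nonneg hKsub (fun k _ _ => (hd k).le)
          _ = ∑ k ∈ K1, d k + ∑ k ∈ J.biUnion K2, d k := Finset.sum_union hdisj
          _ = ∑ k ∈ K1, d k + ∑ v ∈ J, ∑ k ∈ K2 v, d k := by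
              rw [Finset.sum_biUnion
                (fun v1 _ v2 _ hne => hK2disj v1 (Finset.mem_univ v1) v2 (Finset.mem_univ v2) hne)]
          _ ≤ ∑ k ∈ K1, d k + ∑ v ∈ J, f s (j, v) :=
              add_le_add_right (Finset.sum_le_sum hstep2) _
          _ ≤ ∑ k ∈ K1, d k + outflow j := by gcongr
      have h5 : ∑ k ∈ K1, d k = dem j := by rw [hdem', hK1]
      have h6 := hbal j hj
      have h7 := hconc j hj e0 he0 he02 hy0
      linarith
  intro e heL
  rcases (Finset.univ.filter (fun k => sk k = s ∧ e ∈ (P k).zip (P k).tail)).eq_empty_or_nonempty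
    with hemp | ⟨k0, hk0⟩
  · rw [hemp, Finset.sum_empty]; exact hf0 s e
  · rw [Finset.mem_filter] at hk0
    obtain ⟨_, hk0s, hk0e⟩ := hk0
    have he2 : (e.1, e.2) = e := Prod.mk.eta
    have hy1 : y s e = 1 := ((hP k0 hk0s).2.2.2 e hk0e).2
    have hne : e.2 ≠ s := hne_s k0 hk0s e.1 e.2 (by rw [he2]; exact hk0e)
    have hsub : Finset.univ.filter (fun k => sk k = s ∧ e ∈ (P k).zip (P k).tail)
        ⊆ Finset.univ.filter
          (fun k => sk k = s ∧ ∃ a b, P k = a ++ e.2 :: b ∧ b.length ≤ Fintype.card V) := by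
      intro k hk
      rw [Finset.mem_filter] at hk ⊢
      obtain ⟨_, hks, hke⟩ := hk
      obtain ⟨a, b, hab⟩ := exists_decomp_of_mem_zip_tail (P k) e.1 e.2 (by rw [he2]; exact hke)
      refine ⟨Finset.mem_univ k, hks, a ++ [e.1], b, by rw [hab]; simp, ?_⟩
      have hlen : (P k).length ≤ Fintype.card V := ((hP k hks).2.2.1).length_le_card
      rw [hab] at hlen
      simp only [List.length_append, List.length_cons] at hlen
      omega
    calc ∑ k ∈ Finset.univ.filter (fun k => sk k = s ∧ e ∈ (P k).zip (P k).tail), d k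
        ≤ ∑ k ∈ Finset.univ.filter
          (fun k => sk k = s ∧ ∃ a b, P k = a ++ e.2 :: b ∧ b.length ≤ Fintype.card V), d k :=
          Finset.sum_le_sum_of_subset_of_nonneg hsub (fun k _ _ => (hd k).le)
      _ ≤ f s e := key (Fintype.card V) e.2 hne e heL rfl hy1

end OTD



/-- From a feasible solution `(y, f)` of the relaxed origin-based model one obtains a
feasible solution `x` of the relaxed demand-based model: for each demand `k`, `x k` is
the 0-1 indicator of the path from `sk k` to `tk k` traced back along `y (sk k)`-selected
edges; `x` satisfies unit flow conservation for every demand, the weighted flow is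
bounded edgewise by the aggregated flow (hence by the capacity), and the sub-path
optimality constraints hold. -/
theorem origin_to_demand_feasible {V D : Type} [Fintype V] [DecidableEq V]
    [Fintype D] [DecidableEq D]
    (L : Finset (V × V)) (c : V × V → ℝ)
    (sk tk : D → V) (d : D → ℝ) (hd : ∀ k, 0 < d k) (hst : ∀ k, sk k ≠ tk k)
    (y : V → V × V → ℕ) (f : V → V × V → ℝ)
    (hy01 : ∀ s e, y s e ≤ 1) (hf0 : ∀ s e, 0 ≤ f s e)
    (hfb : ∀ s e, f s e ≤ (y s e : ℝ) * ∑ k ∈ Finset.univ.filter (fun k => sk k = s), d k)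
    (hcons : ∀ (s i : V),
      ∑ e ∈ L.filter (fun e => e.2 = i), f s e - ∑ e ∈ L.filter (fun e => e.1 = i), f s e
        = (∑ k ∈ Finset.univ.filter (fun k => sk k = s ∧ tk k = i), d k)
          - (if i = s then ∑ k ∈ Finset.univ.filter (fun k => sk k = s), d k else 0))
    (hcap : ∀ e ∈ L, ∑ s : V, f s e ≤ c e)
    (hpu : ∀ (s i : V),
      (i = s → ∑ e ∈ L.filter (fun e => e.2 = i), y s e = 0)
      ∧ ((∃ k, sk k = s ∧ tk k = i) → ∑ e ∈ L.filter (fun e => e.2 = i), y s e = 1)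
      ∧ (i ≠ s → ∑ e ∈ L.filter (fun e => e.2 = i), y s e ≤ 1)) :
    ∃ x : D → V × V → ℕ,
      -- x k is the indicator of a traced y-path from sk k to tk k
      (∀ k, ∃ p : List V, p.head? = some (sk k) ∧ p.getLast? = some (tk k) ∧ p.Nodup
        ∧ (∀ e ∈ p.zip p.tail, e ∈ L ∧ y (sk k) e = 1)
        ∧ (∀ e, x k e = if e ∈ p.zip p.tail then 1 else 0))
      -- unit flow conservation for each demand
      ∧ (∀ k (i : V),
          ∑ e ∈ L.filter (fun e => e.2 = i), (x k e : ℤ)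
            - ∑ e ∈ L.filter (fun e => e.1 = i), (x k e : ℤ)
          = if i = sk k then -1 else if i = tk k then 1 else 0)
      -- capacity via the aggregated flow
      ∧ (∀ e ∈ L, ∑ k : D, d k * (x k e : ℝ) ≤ ∑ s : V, f s e)
      ∧ (∀ e ∈ L, ∑ s : V, f s e ≤ c e)
      -- sub-path optimality constraints
      ∧ (∀ (s i : V), i ≠ s →
          ∑ e ∈ L.filter (fun e => e.2 = i),
            (Finset.univ.filter (fun k => sk k = s)).sup (fun k => x k e) ≤ 1) := by
  classical
  have hpath : ∀ k : D, ∃ p : List V, p.head? = some (sk k) ∧ p.getLast? = some (tk k) ∧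
      p.Nodup ∧ ∀ e ∈ p.zip p.tail, e ∈ L ∧ y (sk k) e = 1 := by
    intro k
    apply OTD.reach_lemma L sk tk d hd y f hy01 hf0 hfb hcons hpu (sk k) (tk k) (hst k).symm
    have hk : k ∈ Finset.univ.filter (fun k' => sk k' = sk k ∧ tk k' = tk k) := by simp
    have h1 := Finset.single_le_sum (f := d) (fun j _ => (hd j).le) hk
    linarith [hd k]
  choose P hP1 hP2 hP3 hP4 using hpath
  refine ⟨fun k e => if e ∈ (P k).zip (P k).tail then 1 else 0, ?_, ?_, ?_, ?_, ?_⟩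
  · intro k
    exact ⟨P k, hP1 k, hP2 k, hP3 k, hP4 k, fun e => rfl⟩
  · intro k i
    have hmain := OTD.path_conservation L (P k) (sk k) (tk k) (hP1 k) (hP2 k) (hP3 k)
      (fun e he => (hP4 k e he).1) (hst k) i
    have hcast : ∀ e : V × V, (((if e ∈ (P k).zip (P k).tail then 1 else 0 : ℕ)) : ℤ)
        = if e ∈ (P k).zip (P k).tail then (1:ℤ) else 0 := by
      intro e; split <;> simp
    simp only [hcast]
    exact hmain
  · intro e heL
    have hterm : ∀ k : D, d k * (((if e ∈ (P k).zip (P k).tail then 1 else 0 : ℕ)) : ℝ)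
        = if e ∈ (P k).zip (P k).tail then d k else 0 := by
      intro k; split <;> simp
    have hstep : ∀ s' : V,
        ∑ k ∈ (Finset.univ.filter (fun k => e ∈ (P k).zip (P k).tail)).filter
          (fun k => sk k = s'), d k ≤ f s' e := by
      intro s'
      have hflow := OTD.flow_lower L sk tk d hd y f hy01 hf0 hfb hcons hpu s' P
        (fun k hks => by rw [← hks]; exact ⟨hP1 k, hP2 k, hP3 k, hP4 k⟩) e heL
      have hfe : (Finset.univ.filter (fun k => e ∈ (P k).zip (P k).tail)).filter
          (fun k => sk k = s')
          = Finset.univ.filter (fun k => sk k = s' ∧ e ∈ (P k).zip (P k).tail) := by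
        ext k
        simp only [Finset.mem_filter, Finset.mem_univ, true_and]
        tauto
      rw [hfe]
      exact hflow
    calc ∑ k : D, d k * (((if e ∈ (P k).zip (P k).tail then 1 else 0 : ℕ)) : ℝ)
        = ∑ k ∈ Finset.univ.filter (fun k => e ∈ (P k).zip (P k).tail), d k := by
          rw [Finset.sum_filter]
          exact Finset.sum_congr rfl (fun k _ => hterm k)
      _ = ∑ s' ∈ Finset.univ, ∑ k ∈ (Finset.univ.filter
            (fun k => e ∈ (P k).zip (P k).tail)).filter (fun k => sk k = s'), d k :=
          (Finset.sum_fiberwise_of_maps_to (fun k _ => Finset.mem_univ (sk k)) d).symm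
      _ ≤ ∑ s' : V, f s' e := Finset.sum_le_sum (fun s' _ => hstep s')
  · exact hcap
  · intro s i his
    have hle : ∀ e ∈ L.filter (fun e => e.2 = i),
        (Finset.univ.filter (fun k => sk k = s)).sup
          (fun k => if e ∈ (P k).zip (P k).tail then 1 else 0) ≤ y s e := by
      intro e _
      refine Finset.sup_le ?_
      intro k hk
      rw [Finset.mem_filter] at hk
      split
      · next hin =>
          rw [← hk.2]
          exact le_of_eq ((hP4 k e hin).2).symm
      · exact Nat.zero_le _
    calc ∑ e ∈ L.filter (fun e => e.2 = i),
          (Finset.univ.filter (fun k => sk k = s)).sup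
            (fun k => if e ∈ (P k).zip (P k).tail then 1 else 0)
        ≤ ∑ e ∈ L.filter (fun e => e.2 = i), y s e := Finset.sum_le_sum hle
      _ ≤ 1 := (hpu s i).2.2 his
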